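/- Let k be the Dirichlet Green's function k(t,s) = t(1−s) for t ≤ s and k(t,s) = s(1−t) for s ≤ t, let 0 < ρ < (1/4)·ln(4π/(π−2)), set t_ρ := (2/(3π))·arccos(e^{4ρ}·(π−2)/(3π) − 1/3) and F_low(t) := e^{−2ρ} ∫₀^{2/3} k(t,s) sin((3π/2)s) ds + e^{2ρ} ∫_{2/3}^{1} k(t,s) sin((3π/2)s) ds. If λ_ρ ∈ ℝ and a continuous u_ρ : [0,1] → ℝ with ‖u_ρ‖_∞ = ρ satisfy u_ρ(t) = λ_ρ ∫₀¹ k(t,s) · sin((3π/2)s) · e^{u_ρ(s)} / (∫₀¹ e^{u_ρ(x)} dx) ds for all t ∈ [0,1], then −ρ/F_low(t_ρ) ≤ λ_ρ ≤ ρ/F_low(t_ρ). -/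

import Mathlib

open MeasureTheory Set Real

private lemma hd_sin (ω s : ℝ) :
    HasDerivAt (fun x : ℝ => Real.sin (ω*x)) (ω * Real.cos (ω*s)) s := by
  simpa [Function.comp_def, mul_comm] using
    (Real.hasDerivAt_sin (ω*s)).comp s ((hasDerivAt_id s).const_mul ω)

private lemma hd_cos (ω s : ℝ) :
    HasDerivAt (fun x : ℝ => Real.cos (ω*x)) (-(ω * Real.sin (ω*s))) s := by
  simpa [Function.comp_def, mul_comm] using
    (Real.hasDerivAt_cos (ω*s)).comp s ((hasDerivAt_id s).const_mul ω)

private lemma int_s_sin (ω c a b : ℝ) (hω : ω ≠ 0) :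
    ∫ s in a..b, s * c * Real.sin (ω*s) =
      (c/ω^2*(Real.sin (ω*b) - ω*b*Real.cos (ω*b))) -
      (c/ω^2*(Real.sin (ω*a) - ω*a*Real.cos (ω*a))) := by
  apply intervalIntegral.integral_eq_sub_of_hasDerivAt
  · intro x _
    have h2 : HasDerivAt (fun y : ℝ => ω*y*Real.cos (ω*y))
        (ω * 1 * Real.cos (ω*x) + ω*x*(-(ω * Real.sin (ω*x)))) x :=
      (((hasDerivAt_id x).const_mul ω).mul (hd_cos ω x))
    have h := ((hd_sin ω x).sub h2).const_mul (c/ω^2)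
    refine h.congr_deriv ?_
    field_simp
    ring
  · apply Continuous.intervalIntegrable
    fun_prop

private lemma int_c_sub_sin (ω c a b : ℝ) (hω : ω ≠ 0) :
    ∫ s in a..b, c * (1-s) * Real.sin (ω*s) =
      (c * (-((1-b)*Real.cos (ω*b))/ω - Real.sin (ω*b)/ω^2)) -
      (c * (-((1-a)*Real.cos (ω*a))/ω - Real.sin (ω*a)/ω^2)) := by
  apply intervalIntegral.integral_eq_sub_of_hasDerivAt
  · intro x _
    have h2 : HasDerivAt (fun y : ℝ => (1-y)*Real.cos (ω*y))
        ((0-1) * Real.cos (ω*x) + (1-x)*(-(ω * Real.sin (ω*x)))) x :=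
      (((hasDerivAt_const x (1:ℝ)).sub (hasDerivAt_id x)).mul (hd_cos ω x))
    have h := ((h2.div_const ω).neg.sub ((hd_sin ω x).div_const (ω^2))).const_mul c
    have key : c * (-(((0-1) * Real.cos (ω*x) + (1-x)*(-(ω * Real.sin (ω*x))))/ω)
          - ω * Real.cos (ω*x)/ω^2) = c * (1-x) * Real.sin (ω*x) := by
      field_simp; ring
    rw [key] at h
    refine h.congr_of_eventuallyEq (Filter.Eventually.of_forall fun y => ?_)
    simp only [Pi.neg_apply, Pi.sub_apply, neg_div]
  · apply Continuous.intervalIntegrable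
    fun_prop

private lemma sin_sub_mul_cos_pos {θ : ℝ} (h0 : 0 < θ) (hπ : θ < π) :
    0 < Real.sin θ - θ * Real.cos θ := by
  rcases le_or_gt (Real.cos θ) 0 with hc | hc
  · have hs := Real.sin_pos_of_pos_of_lt_pi h0 hπ
    nlinarith
  · have hθ2 : θ < π / 2 := by
      by_contra h
      push_neg at h
      have := Real.cos_nonpos_of_pi_div_two_le_of_le h (by nlinarith [Real.pi_pos])
      linarith
    have ht := Real.lt_tan h0 hθ2
    rw [Real.tan_eq_sin_div_cos] at ht
    have := (lt_div_iff₀ hc).mp ht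
    linarith

/-- Localization of the eigenvalues for the Dirichlet BVP: if
0 < rho < (1/4) ln(4 pi/(pi - 2)) and (lam, u) solves the integral equation with
sup-norm of u equal to rho, then
-rho / F_low(t_rho) <= lam <= rho / F_low(t_rho). -/
theorem dirichlet_bvp_eigenvalue_localization
    (ρ : ℝ) (hρ : 0 < ρ) (hρ' : ρ < 1/4 * Real.log (4 * π / (π - 2)))
    (k : ℝ → ℝ → ℝ)
    (hk : ∀ t s : ℝ, k t s = if t ≤ s then t * (1 - s) else s * (1 - t))
    (Flow : ℝ → ℝ)
    (hFlow : ∀ t : ℝ, Flow t =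
      Real.exp (-(2*ρ)) * (∫ s in (0:ℝ)..(2/3), k t s * Real.sin (3 * π / 2 * s)) +
      Real.exp (2*ρ) * ∫ s in (2/3:ℝ)..1, k t s * Real.sin (3 * π / 2 * s))
    (lam : ℝ) (u : C(Set.Icc (0:ℝ) 1, ℝ)) (hu : ‖u‖ = ρ)
    (heq : ∀ t : Set.Icc (0:ℝ) 1, u t = lam *
      ∫ s in (0:ℝ)..1, k (t:ℝ) s *
            (Real.sin (3 * π / 2 * s) * Real.exp (u (Set.projIcc 0 1 zero_le_one s)) /
              ∫ x in (0:ℝ)..1, Real.exp (u (Set.projIcc 0 1 zero_le_one x)))) :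
    -ρ / Flow (2 / (3 * π) * Real.arccos (Real.exp (4*ρ) * (π - 2) / (3 * π) - 1/3)) ≤ lam ∧ lam ≤ ρ / Flow (2 / (3 * π) * Real.arccos (Real.exp (4*ρ) * (π - 2) / (3 * π) - 1/3)) := by
  have hπ3 : (3:ℝ) < π := Real.pi_gt_three
  have hπ0 : (0:ℝ) < π := by linarith
  -- the constant c and the angle θ
  set c : ℝ := Real.exp (4*ρ) * (π - 2) / (3 * π) - 1/3 with hcdef
  set θ : ℝ := Real.arccos c with hθdef
  set t : ℝ := 2 / (3 * π) * θ with htdef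
  set ω : ℝ := 3 * π / 2 with hωdef
  have hω0 : 0 < ω := by rw [hωdef]; positivity
  have hωne : ω ≠ 0 := ne_of_gt hω0
  have hexp1 : 1 ≤ Real.exp (4*ρ) := Real.one_le_exp (by linarith)
  have hc_lb : -1 < c := by
    have h1 : (π-2)/(3*π) ≤ Real.exp (4*ρ) * (π - 2) / (3 * π) := by
      apply div_le_div_of_nonneg_right ?_ (by positivity)
      nlinarith
    have h2 : (0:ℝ) < (π-2)/(3*π) := div_pos (by linarith) (by positivity)
    rw [hcdef]
    nlinarith
  have hexp_lt : Real.exp (4*ρ) < 4*π/(π-2) := by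
    have h4ρ : 4*ρ < Real.log (4*π/(π-2)) := by linarith
    calc Real.exp (4*ρ) < Real.exp (Real.log (4*π/(π-2))) := Real.exp_lt_exp.mpr h4ρ
      _ = 4*π/(π-2) := Real.exp_log (div_pos (by linarith) (by linarith))
  have hc_ub : c < 1 := by
    have h1 : Real.exp (4*ρ) * (π-2) < 4*π := (lt_div_iff₀ (by linarith)).mp hexp_lt
    have h2 : Real.exp (4*ρ) * (π-2) / (3*π) < 4*π/(3*π) :=
      (div_lt_div_iff_of_pos_right (by positivity)).mpr h1
    have h3 : 4*π/(3*π) = 4/3 := by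
      field_simp
    rw [hcdef]
    rw [h3] at h2
    linarith
  have hθ0 : 0 < θ := Real.arccos_pos.mpr hc_ub
  have hθπ : θ < π :=
    lt_of_le_of_ne (Real.arccos_le_pi c) fun h => absurd (Real.arccos_eq_pi.mp h) (by linarith)
  have hcosθ : Real.cos θ = c := Real.cos_arccos hc_lb.le hc_ub.le
  have hωt : ω * t = θ := by
    rw [hωdef, htdef]
    field_simp
  have ht0 : 0 < t := by rw [htdef]; positivity
  have ht23 : t < 2/3 := by
    rw [htdef]
    rw [div_mul_eq_mul_div, div_lt_div_iff₀ (by positivity) (by norm_num)]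
    nlinarith
  have ht1 : t ≤ 1 := by linarith
  -- continuity of the kernel
  have hkc : Continuous fun s => k t s := by
    have hfe : (fun s => k t s) = fun s => if t ≤ s then t*(1-s) else s*(1-t) :=
      funext fun s => hk t s
    rw [hfe]
    exact Continuous.if_le (by fun_prop) (by fun_prop) continuous_const continuous_id
      fun s hs => by rw [← hs]
  have hfc : Continuous fun s => k t s * Real.sin (ω * s) :=
    hkc.mul (Real.continuous_sin.comp (continuous_const.mul continuous_id))
  -- value of the first integral
  have hA : ∫ s in (0:ℝ)..(2/3), k t s * Real.sin (ω * s)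
      = Real.sin (ω*t)/ω^2 + t/(3*ω) := by
    have hsplit := intervalIntegral.integral_add_adjacent_intervals
      (μ := volume) (a := 0) (b := t) (c := 2/3) (f := fun s => k t s * Real.sin (ω * s))
      (hfc.intervalIntegrable _ _) (hfc.intervalIntegrable _ _)
    rw [← hsplit]
    have e1 : ∫ s in (0:ℝ)..t, k t s * Real.sin (ω * s)
        = ∫ s in (0:ℝ)..t, s * (1-t) * Real.sin (ω * s) := by
      apply intervalIntegral.integral_congr
      intro s hs
      rw [uIcc_of_le ht0.le] at hs
      simp only [hk]
      rcases le_or_gt t s with h|h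
      · have hst : s = t := le_antisymm hs.2 h
        subst hst
        simp
      · rw [if_neg (not_le.mpr h)]
    have e2 : ∫ s in t..(2/3:ℝ), k t s * Real.sin (ω * s)
        = ∫ s in t..(2/3:ℝ), t * (1-s) * Real.sin (ω * s) := by
      apply intervalIntegral.integral_congr
      intro s hs
      rw [uIcc_of_le ht23.le] at hs
      simp only [hk]
      rw [if_pos hs.1]
    rw [e1, e2, int_s_sin ω (1-t) 0 t hωne, int_c_sub_sin ω t t (2/3) hωne]
    have hω23 : ω * (2/3 : ℝ) = π := by rw [hωdef]; ring
    rw [hω23, Real.sin_pi, Real.cos_pi]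
    have hz : ω * (0:ℝ) = 0 := by ring
    rw [hz, Real.sin_zero, Real.cos_zero]
    field_simp
    ring
  -- value of the second integral
  have hsin32 : Real.sin (ω * 1) = -1 := by
    rw [show ω * 1 = π + π/2 by rw [hωdef]; ring, Real.sin_add]
    simp
  have hB : ∫ s in (2/3:ℝ)..1, k t s * Real.sin (ω * s) = t*(3-ω)/(3*ω^2) := by
    have e3 : ∫ s in (2/3:ℝ)..1, k t s * Real.sin (ω * s)
        = ∫ s in (2/3:ℝ)..1, t * (1-s) * Real.sin (ω * s) := by
      apply intervalIntegral.integral_congr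
      intro s hs
      rw [uIcc_of_le (by norm_num)] at hs
      simp only [hk]
      rw [if_pos (by linarith [hs.1])]
    rw [e3, int_c_sub_sin ω t (2/3) 1 hωne]
    have hω23 : ω * (2/3 : ℝ) = π := by rw [hωdef]; ring
    rw [hω23, Real.sin_pi, Real.cos_pi, hsin32]
    field_simp
    ring
  -- closed form for Flow t
  have hE0 : Real.exp (2*ρ) ≠ 0 := (Real.exp_pos _).ne'
  have hexp4 : Real.exp (4*ρ) = Real.exp (2*ρ) * Real.exp (2*ρ) := by
    rw [← Real.exp_add]; ring_nf
  have hexpneg : Real.exp (-(2*ρ)) = 1 / Real.exp (2*ρ) := by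
    rw [Real.exp_neg, inv_eq_one_div]
  have hFt : Flow t = Real.exp (-(2*ρ)) / ω^2 * (Real.sin θ - θ * Real.cos θ) := by
    rw [hFlow t, hA, hB, hcosθ, ← hωt, hcdef, hexp4, hexpneg, hωdef]
    field_simp
    ring
  have hFpos : 0 < Flow t := by
    rw [hFt]
    exact mul_pos (by positivity) (sin_sub_mul_cos_pos hθ0 hθπ)
  -- the normalizing integral D
  set D : ℝ := ∫ x in (0:ℝ)..1, Real.exp (u (Set.projIcc 0 1 zero_le_one x)) with hDdef
  have hDc : Continuous fun x : ℝ => Real.exp (u (Set.projIcc 0 1 zero_le_one x)) :=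
    Real.continuous_exp.comp ((map_continuous u).comp continuous_projIcc)
  have hbound : ∀ y : Set.Icc (0:ℝ) 1, |u y| ≤ ρ := by
    intro y
    have := u.norm_coe_le_norm y
    rwa [hu, Real.norm_eq_abs] at this
  have hDlb : Real.exp (-ρ) ≤ D := by
    rw [hDdef]
    calc Real.exp (-ρ) = ∫ _ in (0:ℝ)..1, Real.exp (-ρ) := by simp
      _ ≤ _ := by
        apply intervalIntegral.integral_mono_on (by norm_num)
          (intervalIntegrable_const) (hDc.intervalIntegrable _ _)
        intro x _
        exact Real.exp_le_exp.mpr (neg_le_of_abs_le (hbound _))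
  have hDub : D ≤ Real.exp ρ := by
    rw [hDdef]
    calc D = D := rfl
      _ ≤ ∫ _ in (0:ℝ)..1, Real.exp ρ := by
        apply intervalIntegral.integral_mono_on (by norm_num)
          (hDc.intervalIntegrable _ _) (intervalIntegrable_const)
        intro x _
        exact Real.exp_le_exp.mpr (le_of_abs_le (hbound _))
      _ = Real.exp ρ := by simp
  have hD0 : 0 < D := lt_of_lt_of_le (Real.exp_pos _) hDlb
  -- weight bounds
  have hwlb : ∀ x : ℝ, Real.exp (-(2*ρ)) ≤ Real.exp (u (Set.projIcc 0 1 zero_le_one x)) / D := by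
    intro x
    have h1 : Real.exp (-(2*ρ)) = Real.exp (-ρ) / Real.exp ρ := by
      rw [← Real.exp_sub]; ring_nf
    rw [h1]
    exact div_le_div₀ (Real.exp_pos _).le
      (Real.exp_le_exp.mpr (neg_le_of_abs_le (hbound _))) hD0 hDub
  have hwub : ∀ x : ℝ, Real.exp (u (Set.projIcc 0 1 zero_le_one x)) / D ≤ Real.exp (2*ρ) := by
    intro x
    have h1 : Real.exp (2*ρ) = Real.exp ρ / Real.exp (-ρ) := by
      rw [← Real.exp_sub]; ring_nf
    rw [h1]
    exact div_le_div₀ (Real.exp_pos _).le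
      (Real.exp_le_exp.mpr (le_of_abs_le (hbound _))) (Real.exp_pos _) hDlb
  -- continuity of the full integrand
  have hgc : Continuous fun s : ℝ => k t s *
      (Real.sin (ω * s) * Real.exp (u (Set.projIcc 0 1 zero_le_one s)) / D) :=
    hkc.mul (((Real.continuous_sin.comp (continuous_const.mul continuous_id)).mul
      ((Real.continuous_exp.comp ((map_continuous u).comp continuous_projIcc)))).div_const D)
  -- nonnegativity of kernel
  have hknn : ∀ s : ℝ, 0 ≤ s → s ≤ 1 → 0 ≤ k t s := by
    intro s h0 h1
    rw [hk]
    split_ifs with h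
    · exact mul_nonneg ht0.le (by linarith only [h1])
    · exact mul_nonneg h0 (by linarith only [ht1, h])
  -- lower bound on the first part
  have h1 : Real.exp (-(2*ρ)) * (∫ s in (0:ℝ)..(2/3), k t s * Real.sin (ω * s))
      ≤ ∫ s in (0:ℝ)..(2/3), k t s *
          (Real.sin (ω * s) * Real.exp (u (Set.projIcc 0 1 zero_le_one s)) / D) := by
    rw [← intervalIntegral.integral_const_mul]
    apply intervalIntegral.integral_mono_on (by norm_num)
      ((continuous_const.mul hfc).intervalIntegrable _ _) (hgc.intervalIntegrable _ _)
    intro s hs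
    have hsin : 0 ≤ Real.sin (ω * s) := by
      apply Real.sin_nonneg_of_nonneg_of_le_pi (mul_nonneg hω0.le hs.1)
      have hh := mul_le_mul_of_nonneg_left hs.2 hπ0.le
      rw [hωdef]
      linarith only [hh]
    have hg : 0 ≤ k t s * Real.sin (ω * s) :=
      mul_nonneg (hknn s hs.1 (by linarith only [hs.2])) hsin
    calc Real.exp (-(2*ρ)) * (k t s * Real.sin (ω * s))
        ≤ (Real.exp (u (Set.projIcc 0 1 zero_le_one s)) / D) * (k t s * Real.sin (ω * s)) :=
          mul_le_mul_of_nonneg_right (hwlb s) hg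
      _ = k t s * (Real.sin (ω * s) * Real.exp (u (Set.projIcc 0 1 zero_le_one s)) / D) := by
          ring
  -- lower bound on the second part
  have h2 : Real.exp (2*ρ) * (∫ s in (2/3:ℝ)..1, k t s * Real.sin (ω * s))
      ≤ ∫ s in (2/3:ℝ)..1, k t s *
          (Real.sin (ω * s) * Real.exp (u (Set.projIcc 0 1 zero_le_one s)) / D) := by
    rw [← intervalIntegral.integral_const_mul]
    apply intervalIntegral.integral_mono_on (by norm_num)
      ((continuous_const.mul hfc).intervalIntegrable _ _) (hgc.intervalIntegrable _ _)
    intro s hs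
    have hsin : Real.sin (ω * s) ≤ 0 := by
      have hrw : Real.sin (ω * s) = -Real.sin (ω * s - π) := by
        rw [Real.sin_sub_pi]; ring
      have hnn : 0 ≤ Real.sin (ω * s - π) := by
        apply Real.sin_nonneg_of_nonneg_of_le_pi
        · have hh := mul_le_mul_of_nonneg_left hs.1 hπ0.le
          rw [hωdef]
          linarith only [hh]
        · have hh := mul_le_mul_of_nonneg_left hs.2 hπ0.le
          rw [hωdef]
          linarith only [hh, hπ0]
      linarith only [hrw ▸ neg_nonpos_of_nonneg hnn]
    have hg : k t s * Real.sin (ω * s) ≤ 0 :=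
      mul_nonpos_of_nonneg_of_nonpos (hknn s (by linarith only [hs.1]) hs.2) hsin
    calc Real.exp (2*ρ) * (k t s * Real.sin (ω * s))
        ≤ (Real.exp (u (Set.projIcc 0 1 zero_le_one s)) / D) * (k t s * Real.sin (ω * s)) :=
          mul_le_mul_of_nonpos_right (hwub s) hg
      _ = k t s * (Real.sin (ω * s) * Real.exp (u (Set.projIcc 0 1 zero_le_one s)) / D) := by
          ring
  -- combine
  have hsum := intervalIntegral.integral_add_adjacent_intervals
    (μ := volume) (a := (0:ℝ)) (b := 2/3) (c := 1)
    (f := fun s => k t s * (Real.sin (ω * s) * Real.exp (u (Set.projIcc 0 1 zero_le_one s)) / D))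
    (hgc.intervalIntegrable _ _) (hgc.intervalIntegrable _ _)
  have hFI : Flow t ≤ ∫ s in (0:ℝ)..1, k t s *
      (Real.sin (ω * s) * Real.exp (u (Set.projIcc 0 1 zero_le_one s)) / D) := by
    rw [hFlow t, ← hsum]
    exact add_le_add h1 h2
  have hIpos : 0 < ∫ s in (0:ℝ)..1, k t s *
      (Real.sin (ω * s) * Real.exp (u (Set.projIcc 0 1 zero_le_one s)) / D) :=
    lt_of_lt_of_le hFpos hFI
  -- the equation at t
  have hI : u ⟨t, ht0.le, ht1⟩ = lam * ∫ s in (0:ℝ)..1, k t s *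
      (Real.sin (ω * s) * Real.exp (u (Set.projIcc 0 1 zero_le_one s)) / D) :=
    heq ⟨t, ht0.le, ht1⟩
  -- conclude
  have habs : |lam| * Flow t ≤ ρ := by
    have ha : |lam| * Flow t ≤ |lam| * ∫ s in (0:ℝ)..1, k t s *
        (Real.sin (ω * s) * Real.exp (u (Set.projIcc 0 1 zero_le_one s)) / D) :=
      mul_le_mul_of_nonneg_left hFI (abs_nonneg lam)
    have hb : |lam| * (∫ s in (0:ℝ)..1, k t s *
        (Real.sin (ω * s) * Real.exp (u (Set.projIcc 0 1 zero_le_one s)) / D))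
        = |u ⟨t, ht0.le, ht1⟩| := by
      rw [hI, abs_mul, abs_of_pos hIpos]
    have hc2 := hbound ⟨t, ht0.le, ht1⟩
    calc |lam| * Flow t ≤ _ := ha
      _ = |u ⟨t, ht0.le, ht1⟩| := hb
      _ ≤ ρ := hc2
  have hfin : |lam| ≤ ρ / Flow t := (le_div_iff₀ hFpos).mpr habs
  obtain ⟨hl, hr⟩ := abs_le.mp hfin
  exact ⟨by rw [neg_div]; exact hl, hr⟩
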